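/- Let I ⊂ ℝ be an open interval and u : I → [−∞,∞) upper semicontinuous. Then u is subaffine on I if and only if either u ≡ −∞ on I or u is a (finite-valued) convex function on I. -/

import Mathlib

lemma stmt5_aux_bot {u : ℝ → EReal} {t : ℝ} (h : ∀ r : ℝ, u t ≤ (r : EReal)) :
    u t = ⊥ := by
  by_contra hb
  have hnt : u t ≠ ⊤ := by
    intro h'; have := h 0; rw [h'] at this; simp at this
  have he : ((u t).toReal : EReal) = u t := EReal.coe_toReal hnt hb
  have := h ((u t).toReal - 1)
  rw [← he] at this
  have : (u t).toReal ≤ (u t).toReal - 1 := EReal.coe_le_coe_iff.mp this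
  linarith

/-- Let `I ⊂ ℝ` be an open interval (open and order-connected) and
`u : I → [−∞,∞)` upper semicontinuous.  Then `u` is subaffine on `I` (whenever
`[α,β] ⊆ I` and an affine function `a` dominates `u` at `α` and `β`, it dominates `u` on
`[α,β]`) if and only if either `u ≡ −∞` on `I` or `u` is a finite convex function on `I`. -/
theorem stmt5 (I : Set ℝ) (hopen : IsOpen I) (hord : I.OrdConnected)
    (u : ℝ → EReal) (husc : UpperSemicontinuousOn u I) (hne : ∀ t ∈ I, u t ≠ ⊤) :
    (∀ α β : ℝ, α ≤ β → Set.Icc α β ⊆ I → ∀ c d : ℝ,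
        u α ≤ ((c * α + d : ℝ) : EReal) → u β ≤ ((c * β + d : ℝ) : EReal) →
        ∀ t ∈ Set.Icc α β, u t ≤ ((c * t + d : ℝ) : EReal))
      ↔ ((∀ t ∈ I, u t = ⊥) ∨
          ∃ g : ℝ → ℝ, ConvexOn ℝ I g ∧ ∀ t ∈ I, u t = (g t : EReal)) := by
  constructor
  · intro hsub
    by_cases hbot : ∃ s ∈ I, u s = ⊥
    · left
      obtain ⟨s, hs, hus⟩ := hbot
      intro t ht
      rcases lt_trichotomy t s with hts | hts | hts
      · -- t < s : find β ∈ I with β < t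
        obtain ⟨ε, hε, hball⟩ := Metric.isOpen_iff.mp hopen t ht
        have hβI : t - ε / 2 ∈ I := by
          apply hball
          rw [Metric.mem_ball, Real.dist_eq, abs_of_nonpos (by linarith)]
          linarith
        have hβt : t - ε / 2 < t := by linarith
        have hne0 : t - (t - ε / 2) ≠ 0 := by intro h; simp at h; linarith
        apply stmt5_aux_bot
        intro r
        obtain ⟨M, hM⟩ : ∃ M : ℝ, u (t - ε / 2) ≤ (M : EReal) :=
          ⟨_, EReal.le_coe_toReal (hne _ hβI)⟩
        have hε0 : (ε : ℝ) ≠ 0 := ne_of_gt hε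
        obtain ⟨c, d, h1, h2⟩ : ∃ c d : ℝ,
            c * (t - ε / 2) + d = M ∧ c * t + d = r := by
          refine ⟨(r - M) / (ε / 2), r - ((r - M) / (ε / 2)) * t, ?_, by ring⟩
          field_simp
          ring
        have key := hsub (t - ε / 2) s (by linarith) (hord.out hβI hs) c d
          (by rw [h1]; exact hM) (by rw [hus]; exact bot_le) t ⟨le_of_lt hβt, le_of_lt hts⟩
        rwa [h2] at key
      · rw [hts]; exact hus
      · -- s < t : find β ∈ I with t < β
        obtain ⟨ε, hε, hball⟩ := Metric.isOpen_iff.mp hopen t ht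
        have hβI : t + ε / 2 ∈ I := by
          apply hball
          rw [Metric.mem_ball, Real.dist_eq, abs_of_nonneg (by linarith)]
          linarith
        have hβt : t < t + ε / 2 := by linarith
        have hne0 : t + ε / 2 - t ≠ 0 := by intro h; simp at h; linarith
        apply stmt5_aux_bot
        intro r
        obtain ⟨M, hM⟩ : ∃ M : ℝ, u (t + ε / 2) ≤ (M : EReal) :=
          ⟨_, EReal.le_coe_toReal (hne _ hβI)⟩
        have hε0 : (ε : ℝ) ≠ 0 := ne_of_gt hε
        obtain ⟨c, d, h1, h2⟩ : ∃ c d : ℝ,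
            c * (t + ε / 2) + d = M ∧ c * t + d = r := by
          refine ⟨(M - r) / (ε / 2), r - ((M - r) / (ε / 2)) * t, ?_, by ring⟩
          field_simp
          ring
        have key := hsub s (t + ε / 2) (by linarith) (hord.out hs hβI) c d
          (by rw [hus]; exact bot_le) (by rw [h1]; exact hM) t ⟨le_of_lt hts, le_of_lt hβt⟩
        rwa [h2] at key
    · right
      push_neg at hbot
      refine ⟨fun t => (u t).toReal, ⟨convex_iff_ordConnected.mpr hord, ?_⟩,
        fun t ht => ((u t).coe_toReal (hne t ht) (hbot t ht)).symm⟩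
      have aux : ∀ x ∈ I, ∀ y ∈ I, x ≤ y → ∀ a b : ℝ, 0 ≤ a → 0 ≤ b → a + b = 1 →
          (u (a * x + b * y)).toReal ≤ a * (u x).toReal + b * (u y).toReal := by
        intro x hx y hy hxy a b ha hb hab
        rcases eq_or_lt_of_le hxy with rfl | hlt
        · have : a * x + b * x = x := by rw [← add_mul, hab, one_mul]
          rw [this, ← add_mul, hab, one_mul]
        · have hne0 : y - x ≠ 0 := sub_ne_zero.mpr hlt.ne'
          obtain ⟨c, d, h1, h2⟩ : ∃ c d : ℝ,
              c * x + d = (u x).toReal ∧ c * y + d = (u y).toReal := by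
            refine ⟨((u y).toReal - (u x).toReal) / (y - x),
              (u x).toReal - (((u y).toReal - (u x).toReal) / (y - x)) * x, by ring, ?_⟩
            field_simp
            ring
          have hux : u x = (((u x).toReal : ℝ) : EReal) :=
            ((u x).coe_toReal (hne x hx) (hbot x hx)).symm
          have huy : u y = (((u y).toReal : ℝ) : EReal) :=
            ((u y).coe_toReal (hne y hy) (hbot y hy)).symm
          have hbx : b * x ≤ b * y := mul_le_mul_of_nonneg_left hxy hb
          have hay : a * x ≤ a * y := mul_le_mul_of_nonneg_left hxy ha
          have hx1 : a * x + b * x = x := by rw [← add_mul, hab, one_mul]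
          have hy1 : a * y + b * y = y := by rw [← add_mul, hab, one_mul]
          have htmem : a * x + b * y ∈ Set.Icc x y := ⟨by linarith, by linarith⟩
          have key := hsub x y hxy (hord.out hx hy) c d
            (by rw [h1, ← hux]) (by rw [h2, ← huy]) (a * x + b * y) htmem
          have h3 : c * (a * x + b * y) + d = a * (u x).toReal + b * (u y).toReal := by
            linear_combination a * h1 + b * h2 - d * hab
          rw [h3] at key
          have hmem : a * x + b * y ∈ I := hord.out hx hy htmem
          have hut : u (a * x + b * y) =
              (((u (a * x + b * y)).toReal : ℝ) : EReal) :=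
            ((u _).coe_toReal (hne _ hmem) (hbot _ hmem)).symm
          rw [hut] at key
          exact EReal.coe_le_coe_iff.mp key
      intro x hx y hy a b ha hb hab
      simp only [smul_eq_mul]
      rcases le_total x y with hxy | hxy
      · exact aux x hx y hy hxy a b ha hb hab
      · have h := aux y hy x hx hxy b a hb ha (by linarith)
        have hc : b * y + a * x = a * x + b * y := by ring
        rw [hc] at h
        linarith
  · rintro (hbot | ⟨g, hg, hug⟩)
    · intro α β hab hsub c d hα hβ t ht
      rw [hbot t (hsub ht)]
      exact bot_le
    · intro α β hab hIcc c d hα hβ t ht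
      have hαI : α ∈ I := hIcc ⟨le_refl α, hab⟩
      have hβI : β ∈ I := hIcc ⟨hab, le_refl β⟩
      have hgα : g α ≤ c * α + d := EReal.coe_le_coe_iff.mp (by rw [← hug α hαI]; exact hα)
      have hgβ : g β ≤ c * β + d := EReal.coe_le_coe_iff.mp (by rw [← hug β hβI]; exact hβ)
      rw [hug t (hIcc ht)]
      rw [EReal.coe_le_coe_iff]
      rcases eq_or_lt_of_le hab with rfl | hlt
      · have : t = α := le_antisymm ht.2 ht.1
        rw [this]; exact hgα
      · have hβα : (0:ℝ) < β - α := by linarith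
        have hne0 : β - α ≠ 0 := ne_of_gt hβα
        have hl : 0 ≤ (β - t) / (β - α) := div_nonneg (by linarith [ht.2]) (le_of_lt hβα)
        have hm : 0 ≤ (t - α) / (β - α) := div_nonneg (by linarith [ht.1]) (le_of_lt hβα)
        have hsum : (β - t) / (β - α) + (t - α) / (β - α) = 1 := by field_simp; ring
        have hcomb : ((β - t) / (β - α)) * α + ((t - α) / (β - α)) * β = t := by
          field_simp
          ring
        have key := hg.2 hαI hβI hl hm hsum
        simp only [smul_eq_mul] at key
        rw [hcomb] at key
        calc g t ≤ ((β - t) / (β - α)) * g α + ((t - α) / (β - α)) * g β := key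
          _ ≤ ((β - t) / (β - α)) * (c * α + d) + ((t - α) / (β - α)) * (c * β + d) := by
              apply add_le_add
              · exact mul_le_mul_of_nonneg_left hgα hl
              · exact mul_le_mul_of_nonneg_left hgβ hm
          _ = c * (((β - t) / (β - α)) * α + ((t - α) / (β - α)) * β)
              + (((β - t) / (β - α)) + ((t - α) / (β - α))) * d := by ring
          _ = c * t + d := by rw [hcomb, hsum]; ring
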